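/- Suppose |[Φ(t:s)]_{ij} − 1/n| ≤ C λ^{t−s+1} for constants C > 0, λ ∈ (0,1), and suppose subgradients are uniformly bounded by L. Define x(t+1) = Φ(t:0)x(0) − ∑_{s=0}^{t} α(s) Φ(t:s+1) g(s) and y(t) = (1/n)∑_i x_i(0) − (1/n)∑_{s=0}^{t−1} α(s) ∑_i g_i(s), where |g_i(s)| ≤ L and α(s) ≥ 0. Then |x_i(t) − y(t)| ≤ C λ^t ‖x(0)‖_1 + nLC ∑_{s=0}^{t−1} λ^{t−s−1} α(s) for all i and t. -/

import Mathlib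

open Finset

/-- Consensus error bound: suppose the transition matrices satisfy
`|[Φ(t:s)]_{ij} − 1/n| ≤ C λ^{t−s+1}` (with the convention `Φ(t:t+1) = I`), the
subgradients are bounded by `L`, and
`x(t+1) = Φ(t:0) x(0) − ∑_{s=0}^{t} α(s) Φ(t:s+1) g(s)`,
`y(t) = (1/n) ∑_i x_i(0) − (1/n) ∑_{s=0}^{t−1} α(s) ∑_i g_i(s)`.
Then `|x_i(t) − y(t)| ≤ C λ^t ‖x(0)‖₁ + n L C ∑_{s=0}^{t−1} λ^{t−s−1} α(s)`. -/
theorem estimate_consensus_error_bound {n : ℕ} (hn : 0 < n)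
    (Φ : ℕ → ℕ → Matrix (Fin n) (Fin n) ℝ) {C l L : ℝ}
    (hC : 0 < C) (hl0 : 0 < l) (hl1 : l < 1) (hL : 0 ≤ L)
    (hΦ : ∀ t s : ℕ, s ≤ t + 1 → ∀ i j, |Φ t s i j - 1 / n| ≤ C * l ^ (t + 1 - s))
    (hΦI : ∀ t : ℕ, Φ t (t + 1) = 1)
    (α : ℕ → ℝ) (hα : ∀ s, 0 ≤ α s)
    (g : ℕ → Fin n → ℝ) (hg : ∀ s i, |g s i| ≤ L)
    (x : ℕ → Fin n → ℝ)
    (hx : ∀ t : ℕ, x (t + 1) =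
      (Φ t 0).mulVec (x 0) - ∑ s ∈ Finset.range (t + 1), α s • ((Φ t (s + 1)).mulVec (g s)))
    (y : ℕ → ℝ)
    (hy : ∀ t : ℕ, y t =
      (1 / n : ℝ) * ∑ i, x 0 i - (1 / n : ℝ) * ∑ s ∈ Finset.range t, α s * ∑ i, g s i) :
    ∀ t : ℕ, ∀ i, |x t i - y t| ≤
      C * l ^ t * (∑ j, |x 0 j|) +
        n * L * C * ∑ s ∈ Finset.range t, l ^ (t - s - 1) * α s := by
  intro t i
  cases t with
  | zero =>
    rw [hy 0]
    simp only [Finset.range_zero, Finset.sum_empty, mul_zero, sub_zero, pow_zero, mul_one,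
      add_zero]
    have key : x 0 i - 1 / n * ∑ j, x 0 j = ∑ j, (Φ 0 1 i j - 1 / n) * x 0 j := by
      rw [hΦI 0]
      simp [Matrix.one_apply, sub_mul, Finset.sum_sub_distrib, ← Finset.mul_sum, ite_mul]
    rw [key]
    calc |∑ j, (Φ 0 1 i j - 1 / n) * x 0 j| ≤ ∑ j, |(Φ 0 1 i j - 1 / n) * x 0 j| :=
          Finset.abs_sum_le_sum_abs _ _
      _ ≤ ∑ j, C * |x 0 j| := by
          refine Finset.sum_le_sum fun j _ => ?_
          rw [abs_mul]
          have := hΦ 0 1 (by omega) i j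
          simpa using mul_le_mul_of_nonneg_right (by simpa using this) (abs_nonneg (x 0 j))
      _ = C * ∑ j, |x 0 j| := (Finset.mul_sum _ _ _).symm
  | succ t =>
    have key : x (t + 1) i - y (t + 1) = (∑ j, (Φ t 0 i j - 1 / n) * x 0 j)
        - ∑ s ∈ Finset.range (t + 1), α s * ∑ j, (Φ t (s + 1) i j - 1 / n) * g s j := by
      rw [hx t, hy (t + 1)]
      simp only [Pi.sub_apply, Finset.sum_apply, Pi.smul_apply, smul_eq_mul,
        Matrix.mulVec, dotProduct, sub_mul, mul_sub, Finset.sum_sub_distrib,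
        Finset.mul_sum, mul_left_comm]
      ring_nf
    rw [key]
    have h1 : |∑ j, (Φ t 0 i j - 1 / n) * x 0 j| ≤ C * l ^ (t + 1) * ∑ j, |x 0 j| := by
      calc |∑ j, (Φ t 0 i j - 1 / n) * x 0 j| ≤ ∑ j, |(Φ t 0 i j - 1 / n) * x 0 j| :=
            Finset.abs_sum_le_sum_abs _ _
        _ ≤ ∑ j, C * l ^ (t + 1) * |x 0 j| := by
            refine Finset.sum_le_sum fun j _ => ?_
            rw [abs_mul]
            exact mul_le_mul_of_nonneg_right (by simpa using hΦ t 0 (by omega) i j)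
              (abs_nonneg _)
        _ = C * l ^ (t + 1) * ∑ j, |x 0 j| := (Finset.mul_sum _ _ _).symm
    have h2 : |∑ s ∈ Finset.range (t + 1), α s * ∑ j, (Φ t (s + 1) i j - 1 / n) * g s j|
        ≤ n * L * C * ∑ s ∈ Finset.range (t + 1), l ^ (t + 1 - s - 1) * α s := by
      calc |∑ s ∈ Finset.range (t + 1), α s * ∑ j, (Φ t (s + 1) i j - 1 / n) * g s j|
          ≤ ∑ s ∈ Finset.range (t + 1), |α s * ∑ j, (Φ t (s + 1) i j - 1 / n) * g s j| :=
            Finset.abs_sum_le_sum_abs _ _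
        _ ≤ ∑ s ∈ Finset.range (t + 1), n * L * C * (l ^ (t + 1 - s - 1) * α s) := by
            refine Finset.sum_le_sum fun s hs => ?_
            have hs' : s ≤ t := by simpa [Nat.lt_succ_iff] using Finset.mem_range.mp hs
            rw [abs_mul, abs_of_nonneg (hα s)]
            have hinner : |∑ j, (Φ t (s + 1) i j - 1 / n) * g s j| ≤ n * (C * l ^ (t - s) * L) := by
              calc |∑ j, (Φ t (s + 1) i j - 1 / n) * g s j|
                  ≤ ∑ j, |(Φ t (s + 1) i j - 1 / n) * g s j| := Finset.abs_sum_le_sum_abs _ _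
                _ ≤ ∑ j : Fin n, C * l ^ (t - s) * L := by
                    refine Finset.sum_le_sum fun j _ => ?_
                    rw [abs_mul]
                    have hb := hΦ t (s + 1) (by omega) i j
                    have : (t + 1 - (s + 1)) = t - s := by omega
                    rw [this] at hb
                    exact mul_le_mul hb (hg s j) (abs_nonneg _)
                      (le_trans (abs_nonneg _) hb)
                _ = n * (C * l ^ (t - s) * L) := by simp [mul_comm]
            have : α s * |∑ j, (Φ t (s + 1) i j - 1 / n) * g s j|
                ≤ α s * (n * (C * l ^ (t - s) * L)) :=
              mul_le_mul_of_nonneg_left hinner (hα s)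
            calc α s * |∑ j, (Φ t (s + 1) i j - 1 / n) * g s j|
                ≤ α s * (n * (C * l ^ (t - s) * L)) := this
              _ = n * L * C * (l ^ (t + 1 - s - 1) * α s) := by
                  have : t + 1 - s - 1 = t - s := by omega
                  rw [this]; ring
        _ = n * L * C * ∑ s ∈ Finset.range (t + 1), l ^ (t + 1 - s - 1) * α s :=
            (Finset.mul_sum _ _ _).symm
    calc |(∑ j, (Φ t 0 i j - 1 / n) * x 0 j)
        - ∑ s ∈ Finset.range (t + 1), α s * ∑ j, (Φ t (s + 1) i j - 1 / n) * g s j|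
        ≤ |∑ j, (Φ t 0 i j - 1 / n) * x 0 j|
          + |∑ s ∈ Finset.range (t + 1), α s * ∑ j, (Φ t (s + 1) i j - 1 / n) * g s j| :=
          abs_sub _ _
      _ ≤ C * l ^ (t + 1) * ∑ j, |x 0 j|
          + n * L * C * ∑ s ∈ Finset.range (t + 1), l ^ (t + 1 - s - 1) * α s :=
          add_le_add h1 h2
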